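/- arXiv:2206.02563 — 2 statements merged into one kernel-verified Lean document; each statement's English description precedes it below -/
import Mathlib

section
/- (Moore–Aronszajn, uniqueness) Let X be a nonempty set and K : X × X → ℝ a kernel function. Suppose (H, φ) and (H', φ') are two pairs each consisting of a real Hilbert space and a map φ : X → H (resp. φ' : X → H') such that K(x,y) = ⟪φ(y), φ(x)⟫_H = ⟪φ'(y), φ'(x)⟫_{H'} for all x, y ∈ X, and the linear spans of φ(X) and φ'(X) are dense in H and H' respectively. Then there exists a unique linear isometric isomorphism U : H → H' such that U(φ(x)) = φ'(x) for all x ∈ X. -/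
open scoped RealInnerProductSpace

lemma ma_inner_lc {X : Type*} {H : Type*} [NormedAddCommGroup H] [InnerProductSpace ℝ H]
    {H' : Type*} [NormedAddCommGroup H'] [InnerProductSpace ℝ H']
    (φ : X → H) (φ' : X → H')
    (h : ∀ a b : X, ⟪φ a, φ b⟫ = ⟪φ' a, φ' b⟫) (f g : X →₀ ℝ) :
    ⟪Finsupp.linearCombination ℝ φ f, Finsupp.linearCombination ℝ φ g⟫ =
      ⟪Finsupp.linearCombination ℝ φ' f, Finsupp.linearCombination ℝ φ' g⟫ := by
  simp only [Finsupp.linearCombination_apply, Finsupp.sum, sum_inner, inner_sum,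
    real_inner_smul_left, real_inner_smul_right, h]

/-- Existence part: a linear isometry sending `φ x` to `φ' x`. -/
lemma ma_exists_isometry {X : Type*}
    {H : Type*} [NormedAddCommGroup H] [InnerProductSpace ℝ H]
    {H' : Type*} [NormedAddCommGroup H'] [InnerProductSpace ℝ H'] [CompleteSpace H']
    (φ : X → H) (φ' : X → H')
    (h : ∀ a b : X, ⟪φ a, φ b⟫ = ⟪φ' a, φ' b⟫)
    (hdense : Dense (Submodule.span ℝ (Set.range φ) : Set H)) :
    ∃ L : H →ₗᵢ[ℝ] H', ∀ x : X, L (φ x) = φ' x := by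
  classical
  set T : (X →₀ ℝ) →ₗ[ℝ] H := Finsupp.linearCombination ℝ φ with hT
  set T' : (X →₀ ℝ) →ₗ[ℝ] H' := Finsupp.linearCombination ℝ φ' with hT'
  have hnorm : ∀ f : X →₀ ℝ, ‖T f‖ = ‖T' f‖ := by
    intro f
    have := ma_inner_lc φ φ' h f f
    rw [real_inner_self_eq_norm_sq, real_inner_self_eq_norm_sq] at this
    nlinarith [norm_nonneg (T f), norm_nonneg (T' f)]
  have hker : LinearMap.ker T ≤ LinearMap.ker T' := by
    intro f hf
    simp only [LinearMap.mem_ker] at hf ⊢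
    have := hnorm f
    rw [hf, norm_zero] at this
    exact (norm_eq_zero.mp this.symm)
  set S : LinearMap.range T →ₗ[ℝ] H' :=
    (Submodule.liftQ (LinearMap.ker T) T' hker).comp
      T.quotKerEquivRange.symm.toLinearMap with hS
  have hSval : ∀ f : X →₀ ℝ, S ⟨T f, LinearMap.mem_range_self T f⟩ = T' f := by
    intro f
    simp only [hS, LinearMap.comp_apply, LinearEquiv.coe_coe,
      LinearMap.quotKerEquivRange_symm_apply_image T f (LinearMap.mem_range_self T f)]
    rfl
  have hSnorm : ∀ v : LinearMap.range T, ‖S v‖ = ‖v‖ := by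
    rintro ⟨-, f, rfl⟩
    rw [hSval f, ← hnorm f]
    rfl
  set Si : LinearMap.range T →ₗᵢ[ℝ] H' := ⟨S, hSnorm⟩ with hSi
  set e : LinearMap.range T →L[ℝ] H := (LinearMap.range T).subtypeL with he
  have hiso : Isometry e := isometry_subtype_coe
  have hrange : (LinearMap.range T : Set H) = (Submodule.span ℝ (Set.range φ) : Set H) := by
    rw [hT, Finsupp.range_linearCombination]
  have h_dense : DenseRange e := by
    have : Set.range e = (LinearMap.range T : Set H) := Subtype.range_coe
    rw [DenseRange, this, hrange]
    exact hdense
  have h_e : IsUniformInducing e := hiso.isUniformInducing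
  set L0 : H →L[ℝ] H' := ContinuousLinearMap.extend Si.toContinuousLinearMap e
    with hL0
  have hL0e : ∀ v : LinearMap.range T, L0 (e v) = Si v := fun v =>
    ContinuousLinearMap.extend_eq _ h_dense h_e v
  have hL0norm : ∀ v : H, ‖L0 v‖ = ‖v‖ := by
    have hcl : IsClosed {v : H | ‖L0 v‖ = ‖v‖} :=
      isClosed_eq (L0.continuous.norm) continuous_norm
    intro v
    refine h_dense.induction_on (p := fun v => ‖L0 v‖ = ‖v‖) v hcl ?_
    intro w
    rw [hL0e w, Si.norm_map]
    exact (hiso.norm_map_of_map_zero (by simp)) w |>.symm ▸ rfl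
  refine ⟨⟨L0.toLinearMap, hL0norm⟩, fun x => ?_⟩
  have h1 : T (Finsupp.single x 1) = φ x := by simp [hT]
  have h2 : T' (Finsupp.single x 1) = φ' x := by simp [hT']
  have h3 : φ x = e ⟨T (Finsupp.single x 1), LinearMap.mem_range_self T _⟩ := by
    simp [he, h1]
  show L0 (φ x) = φ' x
  rw [h3, hL0e, hSi]
  show S _ = φ' x
  rw [hSval, h2]

/-- **Moore–Aronszajn theorem (uniqueness).** Two Hilbert-space realizations
`(H, φ)` and `(H', φ')` of the same kernel function `K`, each with dense span of
the feature-map range, are related by a unique linear isometric isomorphism `U`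
with `U (φ x) = φ' x` for all `x`. -/
theorem moore_aronszajn_uniqueness {X : Type*} [Nonempty X] (K : X → X → ℝ)
    (hsymm : ∀ x y : X, K x y = K y x)
    (hpsd : ∀ (m : ℕ), 1 ≤ m → ∀ (a : Fin m → ℝ) (x : Fin m → X),
      0 ≤ ∑ i, ∑ j, a i * a j * K (x i) (x j))
    {H : Type*} [NormedAddCommGroup H] [InnerProductSpace ℝ H] [CompleteSpace H]
    {H' : Type*} [NormedAddCommGroup H'] [InnerProductSpace ℝ H'] [CompleteSpace H']
    (φ : X → H) (φ' : X → H')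
    (hφ : ∀ x y : X, K x y = ⟪φ y, φ x⟫)
    (hφ' : ∀ x y : X, K x y = ⟪φ' y, φ' x⟫)
    (hdense : Dense (Submodule.span ℝ (Set.range φ) : Set H))
    (hdense' : Dense (Submodule.span ℝ (Set.range φ') : Set H')) :
    ∃! U : H ≃ₗᵢ[ℝ] H', ∀ x : X, U (φ x) = φ' x := by
  have hinner : ∀ a b : X, ⟪φ a, φ b⟫ = ⟪φ' a, φ' b⟫ := fun a b => by
    rw [← hφ b a, ← hφ' b a]
  obtain ⟨L, hL⟩ := ma_exists_isometry φ φ' hinner hdense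
  -- surjectivity of L
  have hclosed : IsClosed (Set.range L) := L.isometry.isClosedEmbedding.isClosed_range
  have hsub : (Submodule.span ℝ (Set.range φ') : Set H') ⊆ Set.range L := by
    have : Submodule.span ℝ (Set.range φ') ≤ LinearMap.range L.toLinearMap := by
      rw [Submodule.span_le]
      rintro - ⟨x, rfl⟩
      exact ⟨φ x, hL x⟩
    intro v hv
    exact this hv
  have hsurj : Function.Surjective L := by
    intro v
    have : v ∈ closure (Submodule.span ℝ (Set.range φ') : Set H') := hdense' v
    have hv : v ∈ Set.range L := by
      have := closure_mono hsub this
      rwa [hclosed.closure_eq] at this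
    exact hv
  refine ⟨LinearIsometryEquiv.ofSurjective L hsurj, fun x => by
    rw [LinearIsometryEquiv.coe_ofSurjective]; exact hL x, ?_⟩
  -- uniqueness
  intro V hV
  have hU : ∀ x : X, (LinearIsometryEquiv.ofSurjective L hsurj) (φ x) = φ' x := fun x => by
    rw [LinearIsometryEquiv.coe_ofSurjective]; exact hL x
  have heq : Set.EqOn (⇑V) (⇑(LinearIsometryEquiv.ofSurjective L hsurj))
      (Submodule.span ℝ (Set.range φ) : Set H) := by
    have h0 : Set.EqOn (⇑V.toLinearEquiv.toLinearMap)
        (⇑(LinearIsometryEquiv.ofSurjective L hsurj).toLinearEquiv.toLinearMap)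
        (Set.range φ) := by
      rintro - ⟨x, rfl⟩
      show V (φ x) = (LinearIsometryEquiv.ofSurjective L hsurj) (φ x)
      rw [hV x, hU x]
    exact LinearMap.eqOn_span' h0
  have := Continuous.ext_on hdense V.continuous
    (LinearIsometryEquiv.ofSurjective L hsurj).continuous heq
  exact LinearIsometryEquiv.ext fun v => congrFun this v
end

section
/- For every α > 0 and γ > 0, the rational quadratic kernel K(x,y) = (1 + ‖x − y‖₂²/(2αγ²))^{−α} on ℝ^d is a kernel function: it is symmetric and positive semi-definite, i.e. Σ_{i=1}^m Σ_{j=1}^m a_i a_j (1 + ‖x_i − x_j‖₂²/(2αγ²))^{−α} ≥ 0 for all m ≥ 1, a ∈ ℝ^m, x_1,…,x_m ∈ ℝ^d. -/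
open Finset MeasureTheory Set

/-- Hadamard powers of a Gram matrix give a PSD quadratic form. -/
lemma aux_inner_pow_psd {m d : ℕ} (n : ℕ) (b : Fin m → ℝ) (v : Fin m → Fin d → ℝ) :
    0 ≤ ∑ i, ∑ j, b i * b j * (∑ k, v i k * v j k) ^ n := by
  have key : ∀ i j : Fin m, b i * b j * (∑ k, v i k * v j k) ^ n
      = ∑ f ∈ Fintype.piFinset (fun _ : Fin n => (univ : Finset (Fin d))),
          (b i * ∏ l, v i (f l)) * (b j * ∏ l, v j (f l)) := by
    intro i j
    have h1 : (∑ k, v i k * v j k) ^ n = ∏ _l : Fin n, (∑ k, v i k * v j k) := by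
      simp
    rw [h1, Finset.prod_univ_sum, Finset.mul_sum]
    refine Finset.sum_congr rfl fun f _ => ?_
    rw [Finset.prod_mul_distrib]
    ring
  simp_rw [key]
  have hswap : ∀ i : Fin m,
      (∑ j : Fin m, ∑ f ∈ Fintype.piFinset (fun _ : Fin n => (univ : Finset (Fin d))),
        (b i * ∏ l, v i (f l)) * (b j * ∏ l, v j (f l)))
      = ∑ f ∈ Fintype.piFinset (fun _ : Fin n => (univ : Finset (Fin d))),
          ∑ j : Fin m, (b i * ∏ l, v i (f l)) * (b j * ∏ l, v j (f l)) :=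
    fun i => Finset.sum_comm
  simp_rw [hswap]
  rw [Finset.sum_comm]
  refine Finset.sum_nonneg fun f _ => ?_
  rw [← Finset.sum_mul_sum]
  exact mul_self_nonneg _

/-- The Gaussian kernel is positive semi-definite. -/
lemma aux_gaussian_psd {d m : ℕ} {c : ℝ} (hc : 0 ≤ c) (a : Fin m → ℝ)
    (x : Fin m → EuclideanSpace ℝ (Fin d)) :
    0 ≤ ∑ i, ∑ j, a i * a j * Real.exp (-(c * ‖x i - x j‖ ^ 2)) := by
  set b : Fin m → ℝ := fun i => a i * Real.exp (-(c * ‖x i‖ ^ 2)) with hb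
  have hexp : ∀ i j, a i * a j * Real.exp (-(c * ‖x i - x j‖ ^ 2))
      = b i * b j * Real.exp (2 * c * (inner ℝ (x i) (x j) : ℝ)) := by
    intro i j
    have hn : ‖x i - x j‖ ^ 2 = ‖x i‖ ^ 2 - 2 * (inner ℝ (x i) (x j) : ℝ) + ‖x j‖ ^ 2 :=
      norm_sub_sq_real _ _
    rw [hn, show -(c * (‖x i‖ ^ 2 - 2 * (inner ℝ (x i) (x j) : ℝ) + ‖x j‖ ^ 2))
        = -(c * ‖x i‖ ^ 2) + -(c * ‖x j‖ ^ 2) + 2 * c * (inner ℝ (x i) (x j) : ℝ) by ring,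
      Real.exp_add, Real.exp_add, hb]
    ring
  simp_rw [hexp]
  have hser : ∀ i j : Fin m, b i * b j * Real.exp (2 * c * (inner ℝ (x i) (x j) : ℝ))
      = ∑' n : ℕ, (b i * b j) * ((2 * c * (inner ℝ (x i) (x j) : ℝ)) ^ n / (n.factorial : ℝ)) := by
    intro i j
    rw [Real.exp_eq_exp_ℝ, NormedSpace.exp_eq_tsum_div, ← tsum_mul_left]
  simp_rw [hser]
  have hsum : ∀ i j : Fin m,
      Summable (fun n : ℕ =>
        (b i * b j) * ((2 * c * (inner ℝ (x i) (x j) : ℝ)) ^ n / (n.factorial : ℝ))) :=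
    fun i j => (Real.summable_pow_div_factorial _).mul_left _
  have h1 : ∀ i : Fin m,
      (∑ j : Fin m, ∑' n : ℕ,
        (b i * b j) * ((2 * c * (inner ℝ (x i) (x j) : ℝ)) ^ n / (n.factorial : ℝ)))
      = ∑' n : ℕ, ∑ j : Fin m,
          (b i * b j) * ((2 * c * (inner ℝ (x i) (x j) : ℝ)) ^ n / (n.factorial : ℝ)) :=
    fun i => (Summable.tsum_finsetSum fun j _ => hsum i j).symm
  simp_rw [h1]
  rw [← Summable.tsum_finsetSum fun i _ => summable_sum fun j _ => hsum i j]
  refine tsum_nonneg fun n => ?_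
  have h2 : ∀ i j : Fin m,
      (b i * b j) * ((2 * c * (inner ℝ (x i) (x j) : ℝ)) ^ n / (n.factorial : ℝ))
      = ((2 * c) ^ n / (n.factorial : ℝ)) * (b i * b j * ((inner ℝ (x i) (x j) : ℝ)) ^ n) := by
    intro i j
    rw [mul_pow]
    ring
  simp_rw [h2, ← Finset.mul_sum]
  refine mul_nonneg (by positivity) ?_
  have h3 : ∀ i j : Fin m, (inner ℝ (x i) (x j) : ℝ) = ∑ k, x i k * x j k := by
    intro i j
    simp [PiLp.inner_apply, RCLike.inner_apply, mul_comm]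
  simp_rw [h3]
  exact aux_inner_pow_psd n b (fun i k => x i k)

/-- The rational quadratic kernel `K x y = (1 + ‖x - y‖₂² / (2αγ²))^(-α)` on `ℝ^d`,
with `α > 0` and `γ > 0`, is a kernel function: symmetric and positive
semi-definite. -/
theorem rational_quadratic_kernel_is_kernel_function {d : ℕ} (α γ : ℝ)
    (hα : 0 < α) (hγ : 0 < γ) :
    (∀ x y : EuclideanSpace ℝ (Fin d),
      (1 + ‖x - y‖ ^ 2 / (2 * α * γ ^ 2)) ^ (-α) =
        (1 + ‖y - x‖ ^ 2 / (2 * α * γ ^ 2)) ^ (-α)) ∧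
    ∀ (m : ℕ), 1 ≤ m → ∀ (a : Fin m → ℝ) (x : Fin m → EuclideanSpace ℝ (Fin d)),
      0 ≤ ∑ i, ∑ j, a i * a j *
        (1 + ‖x i - x j‖ ^ 2 / (2 * α * γ ^ 2)) ^ (-α) := by
  have hc0 : 0 < 2 * α * γ ^ 2 := by positivity
  constructor
  · intro x y
    rw [norm_sub_rev]
  intro m _ a x
  set r : Fin m → Fin m → ℝ := fun i j => 1 + ‖x i - x j‖ ^ 2 / (2 * α * γ ^ 2) with hrdef
  have hr : ∀ i j, 0 < r i j := by
    intro i j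
    have : 0 ≤ ‖x i - x j‖ ^ 2 / (2 * α * γ ^ 2) := by positivity
    simp only [hrdef]; linarith
  have hΓ : (0 : ℝ) < Real.Gamma α := Real.Gamma_pos_of_pos hα
  have key : ∀ i j : Fin m, (r i j) ^ (-α)
      = (Real.Gamma α)⁻¹ * ∫ s in Ioi (0:ℝ), s ^ (α - 1) * Real.exp (-(r i j * s)) := by
    intro i j
    rw [Real.integral_rpow_mul_exp_neg_mul_Ioi hα (hr i j), one_div,
      Real.inv_rpow (hr i j).le, ← Real.rpow_neg (hr i j).le]
    field_simp
  show 0 ≤ ∑ i, ∑ j, a i * a j * (r i j) ^ (-α)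
  simp_rw [key]
  have h1 : ∀ i j : Fin m, a i * a j *
      ((Real.Gamma α)⁻¹ * ∫ s in Ioi (0:ℝ), s ^ (α - 1) * Real.exp (-(r i j * s)))
      = (Real.Gamma α)⁻¹ *
        ∫ s in Ioi (0:ℝ), a i * a j * (s ^ (α - 1) * Real.exp (-(r i j * s))) := by
    intro i j
    rw [MeasureTheory.integral_const_mul]
    ring
  simp_rw [h1, ← Finset.mul_sum]
  refine mul_nonneg (by positivity) ?_
  have hint : ∀ i j : Fin m, IntegrableOn
      (fun s : ℝ => a i * a j * (s ^ (α - 1) * Real.exp (-(r i j * s)))) (Ioi 0) := by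
    intro i j
    have := integrableOn_rpow_mul_exp_neg_mul_rpow
      (s := α - 1) (p := 1) (b := r i j) (by linarith) zero_lt_one (hr i j)
    simp only [Real.rpow_one, neg_mul] at this
    exact this.const_mul (a i * a j)
  have h2 : ∀ i : Fin m,
      (∑ j : Fin m, ∫ s in Ioi (0:ℝ), a i * a j * (s ^ (α - 1) * Real.exp (-(r i j * s))))
      = ∫ s in Ioi (0:ℝ), ∑ j : Fin m,
          a i * a j * (s ^ (α - 1) * Real.exp (-(r i j * s))) :=
    fun i => (MeasureTheory.integral_finset_sum univ fun j _ => hint i j).symm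
  simp_rw [h2]
  rw [← MeasureTheory.integral_finset_sum univ fun i _ =>
    MeasureTheory.integrable_finset_sum univ fun j _ => hint i j]
  refine MeasureTheory.setIntegral_nonneg measurableSet_Ioi fun s hs => ?_
  have hs' : (0:ℝ) < s := hs
  have h3 : ∀ i j : Fin m,
      a i * a j * (s ^ (α - 1) * Real.exp (-(r i j * s)))
      = (s ^ (α - 1) * Real.exp (-s)) *
        (a i * a j * Real.exp (-((s / (2 * α * γ ^ 2)) * ‖x i - x j‖ ^ 2))) := by
    intro i j
    have : r i j * s = s + (s / (2 * α * γ ^ 2)) * ‖x i - x j‖ ^ 2 := by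
      simp only [hrdef]
      field_simp
    rw [this, neg_add, Real.exp_add]
    ring
  simp_rw [h3, ← Finset.mul_sum]
  refine mul_nonneg (by positivity) ?_
  exact aux_gaussian_psd (by positivity) a x
end
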